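/- If a net (G,s,t) is st-connected, then every simple cycle of G has at least one entry node and at least one exit node. -/

import Mathlib

/-- A directed multigraph: a type of vertices, a type of edges,
and source/target maps. -/
structure MultiDigraph (V E : Type) where
  src : E → V
  tgt : E → V

namespace MultiDigraph

variable {V E : Type}

/-- `G.IsWalk u p v` : the list of edges `p` forms a walk from `u` to `v`. -/
def IsWalk (G : MultiDigraph V E) : V → List E → V → Prop
  | u, [], v => u = v
  | u, e :: p, v => G.src e = u ∧ IsWalk G (G.tgt e) p v

/-- The list of vertices visited by a walk starting at `u` with edges `p`. -/
def walkVerts (G : MultiDigraph V E) : V → List E → List V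
  | u, [] => [u]
  | u, e :: p => u :: walkVerts G (G.tgt e) p

/-- A simple path: a walk repeating no vertex. -/
def IsSimplePath (G : MultiDigraph V E) (u : V) (p : List E) (v : V) : Prop :=
  G.IsWalk u p v ∧ (G.walkVerts u p).Nodup

/-- The set of simple `st`-paths using only edges from `F`. -/
def SP (G : MultiDigraph V E) (F : Set E) (s t : V) : Set (List E) :=
  {p | G.IsSimplePath s p t ∧ ∀ e ∈ p, e ∈ F}

/-- An edge is irredundant if it lies on some simple `st`-path. -/
def EdgeIrredundant (G : MultiDigraph V E) (s t : V) (e : E) : Prop :=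
  ∃ p, G.IsSimplePath s p t ∧ e ∈ p

/-- A vertex is irredundant if it lies on some simple `st`-path. -/
def VertexIrredundant (G : MultiDigraph V E) (s t : V) (x : V) : Prop :=
  ∃ p, G.IsSimplePath s p t ∧ x ∈ G.walkVerts s p

/-- A net is `st`-connected if every vertex lies on some `st`-path. -/
def STConnected (G : MultiDigraph V E) (s t : V) : Prop :=
  ∀ x : V, ∃ p, G.IsWalk s p t ∧ x ∈ G.walkVerts s p

end MultiDigraph

namespace MultiDigraph

variable {V E : Type}

/-- A simple cycle based at `v` with edge list `p`: a nonempty closed walk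
whose vertices (except the repeated endpoint) are all distinct. -/
def IsSimpleCycle (G : MultiDigraph V E) (v : V) (p : List E) : Prop :=
  G.IsWalk v p v ∧ p ≠ [] ∧ ((G.walkVerts v p).dropLast).Nodup

/-- The list of (distinct) vertices of a cycle. -/
def cycleVerts (G : MultiDigraph V E) (v : V) (p : List E) : List V :=
  (G.walkVerts v p).dropLast

/-- The set of vertices of a cycle. -/
def cycleSet (G : MultiDigraph V E) (v : V) (p : List E) : Set V :=
  {x | x ∈ G.cycleVerts v p}

/-- `u` is an entry node of the vertex set `C`: `u ∈ C` and some simple path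
from `s` to `u` meets `C` only in `u`. -/
def EntryNode (G : MultiDigraph V E) (s : V) (C : Set V) (u : V) : Prop :=
  u ∈ C ∧ ∃ q, G.IsSimplePath s q u ∧ ∀ x ∈ G.walkVerts s q, x ∈ C → x = u

/-- `u` is an exit node of the vertex set `C`: `u ∈ C` and some simple path
from `u` to `t` meets `C` only in `u`. -/
def ExitNode (G : MultiDigraph V E) (t : V) (C : Set V) (u : V) : Prop :=
  u ∈ C ∧ ∃ q, G.IsSimplePath u q t ∧ ∀ x ∈ G.walkVerts u q, x ∈ C → x = u

/-- `q` is an entry path into `C` ending at `u`. -/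
def IsEntryPath (G : MultiDigraph V E) (s : V) (C : Set V) (q : List E) (u : V) : Prop :=
  u ∈ C ∧ G.IsSimplePath s q u ∧ ∀ x ∈ G.walkVerts s q, x ∈ C → x = u

/-- `q` is an exit path from `C` starting at `u`. -/
def IsExitPath (G : MultiDigraph V E) (t : V) (C : Set V) (q : List E) (u : V) : Prop :=
  u ∈ C ∧ G.IsSimplePath u q t ∧ ∀ x ∈ G.walkVerts u q, x ∈ C → x = u

/-- Length of a shortest directed walk from `u` to `v`. -/
noncomputable def dist (G : MultiDigraph V E) (u v : V) : ℕ :=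
  sInf {n | ∃ p, G.IsWalk u p v ∧ p.length = n}

/-- `d_s(C)`: the minimum over `u ∈ C` of `dist s u`. -/
noncomputable def dS (G : MultiDigraph V E) (s : V) (C : Set V) : ℕ :=
  sInf {n | ∃ u ∈ C, G.dist s u = n}

/-- `d_t(C)`: the minimum over `u ∈ C` of `dist u t`. -/
noncomputable def dT (G : MultiDigraph V E) (t : V) (C : Set V) : ℕ :=
  sInf {n | ∃ u ∈ C, G.dist u t = n}

/-- An `s`-minimal cycle: a simple cycle whose distance from `s` is minimal
among all simple cycles of `G`. -/
def SMinimal (G : MultiDigraph V E) (s v : V) (p : List E) : Prop :=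
  G.IsSimpleCycle v p ∧
    ∀ v' p', G.IsSimpleCycle v' p' →
      G.dS s (G.cycleSet v p) ≤ G.dS s (G.cycleSet v' p')

lemma walkVerts_ne_nil (G : MultiDigraph V E) (u : V) (p : List E) :
    G.walkVerts u p ≠ [] := by cases p <;> simp [walkVerts]

lemma head_walkVerts (G : MultiDigraph V E) (u : V) (p : List E) :
    ∃ l, G.walkVerts u p = u :: l := by cases p <;> simp [walkVerts]

lemma walk_append (G : MultiDigraph V E) {u w v : V} {p1 p2 : List E}
    (h1 : G.IsWalk u p1 w) (h2 : G.IsWalk w p2 v) :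
    G.IsWalk u (p1 ++ p2) v := by
  induction p1 generalizing u with
  | nil => obtain rfl : u = w := h1; simpa
  | cons e p ih => exact ⟨h1.1, ih h1.2⟩

lemma walkVerts_append (G : MultiDigraph V E) {u w : V} {p1 : List E} (p2 : List E)
    (h1 : G.IsWalk u p1 w) :
    G.walkVerts u (p1 ++ p2) = G.walkVerts u p1 ++ (G.walkVerts w p2).tail := by
  induction p1 generalizing u with
  | nil =>
    obtain rfl : u = w := h1
    obtain ⟨l, hl⟩ := head_walkVerts G u p2
    simp [walkVerts, hl]
  | cons e p ih => simp [walkVerts, ih h1.2]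

lemma getLast_walkVerts (G : MultiDigraph V E) {u v : V} {p : List E} (h : G.IsWalk u p v) :
    (G.walkVerts u p).getLast (walkVerts_ne_nil G u p) = v := by
  induction p generalizing u with
  | nil => obtain rfl : u = v := h; rfl
  | cons e p ih =>
    show (u :: G.walkVerts (G.tgt e) p).getLast (by simp) = v
    rw [List.getLast_cons (walkVerts_ne_nil G _ _)]
    exact ih h.2

lemma first_hit (G : MultiDigraph V E) (C : Set V) :
    ∀ (p : List E) (u v : V), G.IsWalk u p v → (∃ x ∈ G.walkVerts u p, x ∈ C) →
    ∃ w p1 p2, p = p1 ++ p2 ∧ G.IsWalk u p1 w ∧ G.IsWalk w p2 v ∧ w ∈ C ∧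
      ∀ y ∈ (G.walkVerts u p1).dropLast, y ∉ C := by
  intro p
  induction p with
  | nil =>
    intro u v h hx
    obtain ⟨x, hxm, hxC⟩ := hx
    simp [walkVerts] at hxm
    subst hxm
    exact ⟨x, [], [], rfl, rfl, h, hxC, by simp [walkVerts]⟩
  | cons e p ih =>
    intro u v h hx
    by_cases hu : u ∈ C
    · exact ⟨u, [], e :: p, rfl, rfl, h, hu, by simp [walkVerts]⟩
    · have hx' : ∃ x ∈ G.walkVerts (G.tgt e) p, x ∈ C := by
        obtain ⟨x, hxm, hxC⟩ := hx
        simp only [walkVerts, List.mem_cons] at hxm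
        rcases hxm with rfl | hm
        · exact absurd hxC hu
        · exact ⟨x, hm, hxC⟩
      obtain ⟨w, p1, p2, hsplit, h1, h2, hw, hno⟩ := ih (G.tgt e) v h.2 hx'
      refine ⟨w, e :: p1, p2, by simp [hsplit], ⟨h.1, h1⟩, h2, hw, ?_⟩
      intro y hy
      simp only [walkVerts] at hy
      rw [List.dropLast_cons_of_ne_nil (walkVerts_ne_nil G _ _)] at hy
      rcases List.mem_cons.mp hy with rfl | hy
      · exact hu
      · exact hno y hy

lemma last_hit (G : MultiDigraph V E) (C : Set V) :
    ∀ (p : List E) (u v : V), G.IsWalk u p v → (∃ x ∈ G.walkVerts u p, x ∈ C) →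
    ∃ w p1 p2, p = p1 ++ p2 ∧ G.IsWalk u p1 w ∧ G.IsWalk w p2 v ∧ w ∈ C ∧
      ∀ y ∈ (G.walkVerts w p2).tail, y ∉ C := by
  intro p
  induction p with
  | nil =>
    intro u v h hx
    obtain ⟨x, hxm, hxC⟩ := hx
    simp [walkVerts] at hxm
    subst hxm
    exact ⟨x, [], [], rfl, rfl, h, hxC, by simp [walkVerts]⟩
  | cons e p ih =>
    intro u v h hx
    by_cases hrest : ∃ x ∈ G.walkVerts (G.tgt e) p, x ∈ C
    · obtain ⟨w, p1, p2, hsplit, h1, h2, hw, hno⟩ := ih (G.tgt e) v h.2 hrest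
      exact ⟨w, e :: p1, p2, by simp [hsplit], ⟨h.1, h1⟩, h2, hw, hno⟩
    · have hu : u ∈ C := by
        obtain ⟨x, hxm, hxC⟩ := hx
        simp only [walkVerts, List.mem_cons] at hxm
        rcases hxm with rfl | hm
        · exact hxC
        · exact absurd ⟨x, hm, hxC⟩ hrest
      refine ⟨u, [], e :: p, rfl, rfl, h, hu, ?_⟩
      intro y hy hyC
      simp only [walkVerts, List.tail_cons] at hy
      exact hrest ⟨y, hy, hyC⟩

lemma exists_simple (G : MultiDigraph V E) :
    ∀ (n : ℕ) (p : List E) (u v : V), p.length ≤ n → G.IsWalk u p v →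
    ∃ q, G.IsSimplePath u q v ∧ ∀ x ∈ G.walkVerts u q, x ∈ G.walkVerts u p := by
  classical
  intro n
  induction n with
  | zero =>
    intro p u v hl h
    obtain rfl : p = [] := List.length_eq_zero_iff.mp (Nat.le_zero.mp hl)
    obtain rfl : u = v := h
    exact ⟨[], ⟨rfl, by simp [walkVerts]⟩, fun x hx => hx⟩
  | succ n ih =>
    intro p u v hl h
    by_cases hnd : (G.walkVerts u p).Nodup
    · exact ⟨p, ⟨h, hnd⟩, fun x hx => hx⟩
    · rw [List.nodup_iff_count_le_one] at hnd
      push_neg at hnd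
      obtain ⟨x, hx2⟩ := hnd
      have hx2 : 2 ≤ (G.walkVerts u p).count x := hx2
      have hxm : x ∈ G.walkVerts u p :=
        List.count_pos_iff.mp (by omega)
      obtain ⟨w, p1, p2, hsplit, h1, h2, hw, hno⟩ :=
        last_hit G {x} p u v h ⟨x, hxm, rfl⟩
      obtain rfl : w = x := hw
      have hvsplit : G.walkVerts u p =
          G.walkVerts u p1 ++ (G.walkVerts w p2).tail := by
        rw [hsplit]; exact walkVerts_append G p2 h1
      have hcount2 : (G.walkVerts w p2).tail.count w = 0 := by
        rw [List.count_eq_zero]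
        intro hmem
        exact hno w hmem rfl
      have hcount1 : 2 ≤ (G.walkVerts u p1).count w := by
        rw [hvsplit, List.count_append, hcount2] at hx2
        omega
      have hxm1 : w ∈ G.walkVerts u p1 :=
        List.count_pos_iff.mp (by omega)
      obtain ⟨w', q1, q2, hsplit1, hq1, hq2, hw', hno1⟩ :=
        first_hit G {w} p1 u w h1 ⟨w, hxm1, rfl⟩
      obtain rfl : w = w' := hw'.symm
      have hq1verts : G.walkVerts u q1 =
          (G.walkVerts u q1).dropLast ++ [w] := by
        conv_lhs => rw [← List.dropLast_append_getLast (walkVerts_ne_nil G u q1)]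
        rw [getLast_walkVerts G hq1]
      have hc1 : (G.walkVerts u q1).count w ≤ 1 := by
        rw [hq1verts, List.count_append]
        have h0 : (G.walkVerts u q1).dropLast.count w = 0 := by
          rw [List.count_eq_zero]
          intro hmem
          exact hno1 w hmem rfl
        have h1' : ([w] : List V).count w ≤ 1 := by
          simp
        omega
      have hq2ne : q2 ≠ [] := by
        intro hq2nil
        subst hq2nil
        rw [hsplit1, List.append_nil] at hcount1
        omega
      have hlen : (q1 ++ p2).length ≤ n := by
        have hlp1 : q1.length < p1.length := by
          rw [hsplit1, List.length_append]
          have := List.length_pos_iff.mpr hq2ne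
          omega
        have := hl
        rw [hsplit, List.length_append] at this
        simp only [List.length_append]
        omega
      obtain ⟨q, hq, hsub⟩ := ih (q1 ++ p2) u v hlen (walk_append G hq1 h2)
      refine ⟨q, hq, fun y hy => ?_⟩
      have hy' := hsub y hy
      rw [walkVerts_append G p2 hq1] at hy'
      rw [hvsplit]
      rcases List.mem_append.mp hy' with hm | hm
      · apply List.mem_append_left
        have : G.walkVerts u p1 = G.walkVerts u q1 ++ (G.walkVerts w q2).tail := by
          rw [hsplit1]; exact walkVerts_append G q2 hq1
        rw [this]; exact List.mem_append_left _ hm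
      · exact List.mem_append_right _ hm

end MultiDigraph

open MultiDigraph in
/-- In an `st`-connected net, every simple cycle has at least one entry node
and at least one exit node. -/
theorem stmt18 {V E : Type} (G : MultiDigraph V E) (s t : V)
    (hconn : G.STConnected s t) (v : V) (p : List E)
    (hC : G.IsSimpleCycle v p) :
    (∃ u, G.EntryNode s (G.cycleSet v p) u) ∧
    (∃ u, G.ExitNode t (G.cycleSet v p) u) := by
  have hvC : v ∈ G.cycleSet v p := by
    obtain ⟨hw, hne, _⟩ := hC
    cases p with
    | nil => exact absurd rfl hne
    | cons e p' =>
      show v ∈ (G.walkVerts v (e :: p')).dropLast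
      simp only [walkVerts]
      rw [List.dropLast_cons_of_ne_nil (walkVerts_ne_nil G _ _)]
      exact List.mem_cons_self
  obtain ⟨p0, hw0, hv0⟩ := hconn v
  constructor
  · obtain ⟨w, p1, p2, _, h1, _, hwC, hno⟩ :=
      first_hit G (G.cycleSet v p) p0 s t hw0 ⟨v, hv0, hvC⟩
    obtain ⟨q, hq, hsub⟩ := exists_simple G p1.length p1 s w le_rfl h1
    refine ⟨w, hwC, q, hq, ?_⟩
    intro x hx hxC
    have hx1 := hsub x hx
    rw [← List.dropLast_append_getLast (walkVerts_ne_nil G s p1)] at hx1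
    rcases List.mem_append.mp hx1 with hm | hm
    · exact absurd hxC (hno x hm)
    · rw [getLast_walkVerts G h1] at hm
      simpa using hm
  · obtain ⟨w, p1, p2, _, _, h2, hwC, hno⟩ :=
      last_hit G (G.cycleSet v p) p0 s t hw0 ⟨v, hv0, hvC⟩
    obtain ⟨q, hq, hsub⟩ := exists_simple G p2.length p2 w t le_rfl h2
    refine ⟨w, hwC, q, hq, ?_⟩
    intro x hx hxC
    have hx2 := hsub x hx
    obtain ⟨l, hl⟩ := head_walkVerts G w p2
    rw [hl] at hx2
    rcases List.mem_cons.mp hx2 with rfl | hm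
    · rfl
    · exact absurd hxC (hno x (by rw [hl]; exact hm))
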